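/- For the critical transmission rate β(t) = (γ+μ)/(1 − K e^{−(μ+α)t}) on [0,2π) with K ∈ (0,1), the mean satisfies (1/(γ+μ))⟨β⟩ − 1 = (1/(2π(μ+α)))·log((1 − K e^{−2π(μ+α)})/(1−K)); that is, 2π(μ+α)(⟨β⟩/(γ+μ) − 1) = log((1 − K e^{−2π(μ+α)})/(1−K)) =: Γ > 0. -/

import Mathlib

open Real intervalIntegral

theorem critical_beta_mean
    (μ α γ K : ℝ) (hμ : 0 < μ) (hα : 0 < α) (hγ : 0 < γ)
    (hK0 : 0 < K) (hK1 : K < 1)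
    (β : ℝ → ℝ)
    (hβ : ∀ t, β t = (γ + μ) / (1 - K * Real.exp (-(μ + α) * t))) :
    2 * π * (μ + α) *
        (((1 / (2 * π)) * ∫ t in (0:ℝ)..(2 * π), β t) / (γ + μ) - 1)
      = Real.log ((1 - K * Real.exp (-(2 * π) * (μ + α))) / (1 - K)) ∧
    0 < Real.log ((1 - K * Real.exp (-(2 * π) * (μ + α))) / (1 - K)) := by
  have hπ : (0:ℝ) < π := Real.pi_pos
  set a : ℝ := μ + α with ha_def
  have ha : 0 < a := by positivity
  have hgm : 0 < γ + μ := by positivity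
  clear ha_def
  clear_value a
  -- positivity of denominator on the interval
  have hpos : ∀ t ∈ Set.uIcc (0:ℝ) (2*π), 0 < 1 - K * Real.exp (-a * t) := by
    intro t ht
    rw [Set.uIcc_of_le (by positivity)] at ht
    have h1 : Real.exp (-a * t) ≤ 1 := by
      apply Real.exp_le_one_iff.mpr
      nlinarith [ht.1]
    nlinarith [Real.exp_pos (-a * t)]
  -- antiderivative
  set F : ℝ → ℝ := fun t => (γ + μ) * (t + a⁻¹ * Real.log (1 - K * Real.exp (-a * t)))
    with hF_def
  have hderiv : ∀ t ∈ Set.uIcc (0:ℝ) (2*π), HasDerivAt F (β t) t := by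
    intro t ht
    have hg : 0 < 1 - K * Real.exp (-a * t) := hpos t ht
    have h1 : HasDerivAt (fun t : ℝ => 1 - K * Real.exp (-a * t))
        (a * K * Real.exp (-a * t)) t := by
      have : HasDerivAt (fun t : ℝ => Real.exp (-a * t)) (Real.exp (-a * t) * (-a)) t := by
        have h0 : HasDerivAt (fun t : ℝ => -a * t) (-a) t := by
          simpa using (hasDerivAt_id t).const_mul (-a)
        exact h0.exp
      have := ((this.const_mul K).const_sub 1)
      exact this.congr_deriv (by ring)
    have h2 : HasDerivAt (fun t : ℝ => Real.log (1 - K * Real.exp (-a * t)))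
        ((a * K * Real.exp (-a * t)) / (1 - K * Real.exp (-a * t))) t :=
      h1.log (ne_of_gt hg)
    have h3 : HasDerivAt F
        ((γ + μ) * (1 + a⁻¹ * ((a * K * Real.exp (-a * t)) / (1 - K * Real.exp (-a * t))))) t :=
      (((hasDerivAt_id t).add (h2.const_mul a⁻¹)).const_mul (γ + μ))
    convert h3 using 1
    rw [hβ t]
    have hane : a ≠ 0 := ne_of_gt ha
    have hgne : (1 - K * Real.exp (-a * t)) ≠ 0 := ne_of_gt hg
    rw [show a⁻¹ * (a * K * Real.exp (-a*t) / (1 - K * Real.exp (-a*t)))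
        = K * Real.exp (-a*t) / (1 - K * Real.exp (-a*t)) from by
      field_simp]
    have hgne2 : (1 - K * Real.exp (-(a * t))) ≠ 0 := by rw [← neg_mul]; exact hgne
    field_simp
    ring
  have hcont : ContinuousOn β (Set.uIcc (0:ℝ) (2*π)) := by
    have hc : ContinuousOn (fun t => (γ + μ) / (1 - K * Real.exp (-a * t)))
        (Set.uIcc (0:ℝ) (2*π)) := by
      apply ContinuousOn.div continuousOn_const
      · fun_prop
      · intro t ht; exact ne_of_gt (hpos t ht)
    exact hc.congr fun t _ => hβ t
  have hint : ∫ t in (0:ℝ)..(2*π), β t = F (2*π) - F 0 := by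
    exact intervalIntegral.integral_eq_sub_of_hasDerivAt hderiv
      (hcont.intervalIntegrable)
  have h2πpos : 0 < 1 - K * Real.exp (-a * (2*π)) :=
    hpos (2*π) (Set.right_mem_uIcc)
  have hKlt : 0 < 1 - K := by linarith
  have hlogdiv : Real.log ((1 - K * Real.exp (-(2*π) * a)) / (1 - K))
      = Real.log (1 - K * Real.exp (-a * (2*π))) - Real.log (1 - K) := by
    rw [Real.log_div (by rw [show -(2*π) * a = -a * (2*π) by ring]; exact ne_of_gt h2πpos)
      (ne_of_gt hKlt)]
    ring_nf
  constructor
  · rw [hint, hF_def]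
    simp only
    rw [hlogdiv]
    have h0 : Real.log (1 - K * Real.exp (-a * 0)) = Real.log (1 - K) := by
      norm_num
    rw [h0]
    field_simp
    ring
  · rw [hlogdiv]
    have : Real.log (1 - K) < Real.log (1 - K * Real.exp (-a * (2*π))) := by
      apply Real.log_lt_log hKlt
      have : Real.exp (-a * (2*π)) < 1 := by
        apply Real.exp_lt_one_iff.mpr; nlinarith
      nlinarith
    rw [show -(2*π) * a = -a * (2*π) by ring] at *
    linarith
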